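/- arXiv:2106.00715 — 3 statements merged into one kernel-verified Lean document; each statement's English description precedes it below -/
import Mathlib

section
/- Let u, v, w ∈ ℂ with |u| ≠ |v|, and let 𝒳(t) = u e^{it} + v e^{-it} + w. Then the winding number of the closed curve 𝒳 (for t ∈ [0, 2π]) around the point w equals sign(|u|² − |v|²), i.e., (1/2πi) ∮ 𝒳′(t)/(𝒳(t) − w) dt = 1 if |u| > |v| and −1 if |u| < |v|. -/
open Complex Real

lemma exp_deriv_aux (d : ℂ) (t : ℝ) :
    HasDerivAt (fun t : ℝ => Complex.exp (d * t)) (d * Complex.exp (d * t)) t := by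
  have h1 : HasDerivAt (fun t : ℝ => (t : ℂ)) 1 t := Complex.ofRealCLM.hasDerivAt
  have h2 : HasDerivAt (fun t : ℝ => d * (t : ℂ)) d t := by simpa using h1.const_mul d
  simpa [mul_comm] using h2.cexp

lemma winding_aux (a b c : ℂ) (h : ‖b‖ < ‖a‖) (hre : c.re = 0)
    (hper : Complex.exp (-(2*c) * (2*Real.pi : ℝ)) = 1) :
    ∫ t in (0:ℝ)..(2*Real.pi),
      (c*a*Complex.exp (c*t) - c*b*Complex.exp (-(c*t))) /
        (a*Complex.exp (c*t) + b*Complex.exp (-(c*t))) = 2*Real.pi*c := by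
  have ha0 : (0:ℝ) < ‖a‖ := (norm_nonneg b).trans_lt h
  have ha : a ≠ 0 := by simpa using ha0.ne'
  have hsplit : ∀ t : ℝ, Complex.exp (-(2*c) * t)
      = Complex.exp (-(c*t)) * Complex.exp (-(c*t)) := by
    intro t; rw [← Complex.exp_add]; congr 1; ring
  have hinv : ∀ t : ℝ, Complex.exp (-(c*(t:ℂ))) = (Complex.exp (c*t))⁻¹ :=
    fun t => Complex.exp_neg _
  have habs1 : ∀ z : ℂ, z.re = 0 → ‖Complex.exp z‖ = 1 := by
    intro z hz; rw [Complex.norm_exp, hz, Real.exp_zero]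
  have hre1 : ∀ t : ℝ, (c * (t:ℂ)).re = 0 := by
    intro t; simp [Complex.mul_re, hre]
  have habs : ∀ t : ℝ, ‖(b/a) * Complex.exp (-(2*c) * t)‖ < 1 := by
    intro t
    rw [norm_mul, norm_div, habs1 _ (by simp [Complex.mul_re, hre]), mul_one, div_lt_one ha0]
    exact h
  have hGslit : ∀ t : ℝ, 1 + (b/a) * Complex.exp (-(2*c) * t) ∈ Complex.slitPlane := by
    intro t
    left
    have h1 := habs t
    have h2 := Complex.abs_re_le_norm ((b/a) * Complex.exp (-(2*c) * t))
    have h3 := neg_abs_le (((b/a) * Complex.exp (-(2*c) * t)).re)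
    simp only [Complex.add_re, Complex.one_re]
    linarith
  have hGne : ∀ t : ℝ, (1:ℂ) + (b/a) * Complex.exp (-(2*c) * t) ≠ 0 :=
    fun t => Complex.slitPlane_ne_zero (hGslit t)
  have hGderiv : ∀ t : ℝ, HasDerivAt (fun t : ℝ => 1 + (b/a) * Complex.exp (-(2*c) * t))
      ((b/a) * (-(2*c)) * Complex.exp (-(2*c) * t)) t := by
    intro t
    have h1 := ((exp_deriv_aux (-(2*c)) t).const_mul (b/a)).const_add (1:ℂ)
    refine h1.congr_deriv ?_
    ring
  have hden : ∀ t : ℝ, a*Complex.exp (c*t) + b*Complex.exp (-(c*t)) ≠ 0 := by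
    intro t h0
    have h1 : a*Complex.exp (c*t) = -(b*Complex.exp (-(c*t))) := by
      linear_combination h0
    have h2 := congrArg (‖·‖) h1
    rw [norm_neg, norm_mul, norm_mul, habs1 _ (hre1 t),
      habs1 _ (by simpa using neg_eq_zero.mpr (hre1 t)), mul_one, mul_one] at h2
    exact absurd h2 h.ne'
  have hFderiv : ∀ t : ℝ, HasDerivAt
      (fun t : ℝ => c*t + Complex.log (1 + (b/a) * Complex.exp (-(2*c) * t)))
      ((c*a*Complex.exp (c*t) - c*b*Complex.exp (-(c*t))) /
        (a*Complex.exp (c*t) + b*Complex.exp (-(c*t)))) t := by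
    intro t
    have hlog : HasDerivAt (fun t : ℝ => Complex.log (1 + (b/a) * Complex.exp (-(2*c) * t)))
        ((1 + (b/a) * Complex.exp (-(2*c) * t))⁻¹ *
          ((b/a) * (-(2*c)) * Complex.exp (-(2*c) * t))) t :=
      by have h := (Complex.hasDerivAt_log (hGslit t)).comp t (hGderiv t); exact h
    have hct : HasDerivAt (fun t : ℝ => c*(t:ℂ)) c t := by
      simpa using (Complex.ofRealCLM.hasDerivAt (x := t)).const_mul c
    have hsum := hct.add hlog
    refine hsum.congr_deriv ?_
    symm
    have hE : Complex.exp (c*(t:ℂ)) ≠ 0 := Complex.exp_ne_zero _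
    have hG := hGne t
    have hd := hden t
    rw [hsplit t, hinv t] at hG ⊢
    rw [hinv t] at hd
    field_simp at hG hd ⊢
    ring_nf at hG hd ⊢
    have hD : a * Complex.exp (c*(t:ℂ)) ^ 2 + b ≠ 0 := fun h0 => hd (by rw [← add_mul, h0, zero_mul])
    have hD2 : a * Complex.exp (c*(t:ℂ)) ^ 2 * b + a^2 * Complex.exp (c*(t:ℂ))^4 ≠ 0 := by
      have he : a * Complex.exp (c*(t:ℂ)) ^ 2 * b + a^2 * Complex.exp (c*(t:ℂ))^4
          = (a * Complex.exp (c*(t:ℂ))^2) * (a * Complex.exp (c*(t:ℂ))^2 + b) := by ring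
      rw [he]
      exact mul_ne_zero (mul_ne_zero ha (pow_ne_zero _ hE)) hD
    field_simp [hD, hD2]
    ring
  have hcont : Continuous (fun t : ℝ =>
      (c*a*Complex.exp (c*t) - c*b*Complex.exp (-(c*t))) /
        (a*Complex.exp (c*t) + b*Complex.exp (-(c*t)))) := by
    apply Continuous.div
    · fun_prop
    · fun_prop
    · exact hden
  rw [intervalIntegral.integral_eq_sub_of_hasDerivAt (fun t _ => hFderiv t)
    (hcont.intervalIntegrable _ _)]
  have h0 : -(2*c) * ((0:ℝ):ℂ) = 0 := by simp
  rw [hper, h0, Complex.exp_zero]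
  push_cast
  ring

/-- Winding number of `𝒳(t) = u e^{it} + v e^{-it} + w` around `w` over
`t ∈ [0, 2π]` equals `sign(|u|² − |v|²)`: it is `1` if `|u| > |v|` and `−1`
if `|u| < |v|`. -/
theorem stmt3 (u v w : ℂ) (huv : ‖u‖ ≠ ‖v‖)
    (X : ℝ → ℂ)
    (hX : ∀ t : ℝ, X t = u * Complex.exp (Complex.I * t) + v * Complex.exp (-(Complex.I * t)) + w) :
    (1 / (2 * Real.pi * Complex.I)) *
        ∫ t in (0:ℝ)..(2 * Real.pi),
          (Complex.I * u * Complex.exp (Complex.I * t)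
              - Complex.I * v * Complex.exp (-(Complex.I * t))) / (X t - w)
      = if ‖v‖ < ‖u‖ then 1 else -1 := by
  have hXsub : ∀ t : ℝ, X t - w
      = u * Complex.exp (Complex.I * t) + v * Complex.exp (-(Complex.I * t)) := by
    intro t; rw [hX t]; ring
  simp only [hXsub]
  have hpi : (Real.pi : ℂ) ≠ 0 := by exact_mod_cast Real.pi_ne_zero
  by_cases hlt : ‖v‖ < ‖u‖
  · rw [if_pos hlt]
    have key := winding_aux u v Complex.I hlt (by simp)
      (by
        have h2 := Complex.exp_int_mul_two_pi_mul_I (-2)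
        convert h2 using 2
        push_cast; ring)
    rw [key]
    field_simp
  · rw [if_neg hlt]
    have hlt' : ‖u‖ < ‖v‖ := lt_of_le_of_ne (not_lt.mp hlt) huv
    have key := winding_aux v u (-Complex.I) hlt' (by simp)
      (by
        have h2 := Complex.exp_int_mul_two_pi_mul_I 2
        convert h2 using 2
        push_cast; ring)
    have heq : ∀ t : ℝ,
        (Complex.I * u * Complex.exp (Complex.I * t)
            - Complex.I * v * Complex.exp (-(Complex.I * t))) /
          (u * Complex.exp (Complex.I * t) + v * Complex.exp (-(Complex.I * t)))
        = ((-Complex.I)*v*Complex.exp ((-Complex.I)*t) - (-Complex.I)*u*Complex.exp (-((-Complex.I)*t))) /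
          (v*Complex.exp ((-Complex.I)*t) + u*Complex.exp (-((-Complex.I)*t))) := by
      intro t
      have e1 : -Complex.I*(t:ℂ) = -(Complex.I*t) := by ring
      have e2 : -(-Complex.I*(t:ℂ)) = Complex.I*t := by ring
      rw [e2, e1]
      ring
    simp only [heq]
    rw [key]
    field_simp
end

section
/- For any triangle with incenter X₁, barycenter X₂, circumcenter X₃, and Mittenpunkt X₉, and with ρ = r/R the ratio of inradius to circumradius, one has X₁ = α X₂ + β X₃ + γ X₉ where α = 6/(ρ+2), β = 2ρ/(ρ+2), γ = −(ρ+4)/(ρ+2). Note α + β + γ = 1, so this is an affine combination. -/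
open Complex

set_option maxHeartbeats 1000000 in
private lemma tri_aux (x y z t d : ℝ) (hx : 0 ≤ x) (hy : 0 < y) (hz : 0 < z)
    (hd : d ≠ 0) (h1 : x^2 = y^2 + z^2 - 2*t) (h2 : y^2*z^2 = t^2 + d^2) :
    0 < y + z - x := by
  have hd2 : 0 < d^2 := lt_of_le_of_ne (sq_nonneg d) (Ne.symm (pow_ne_zero 2 hd))
  by_contra hcon
  push_neg at hcon
  have hxyz : y + z ≤ x := by linarith
  have hyz : 0 < y*z := mul_pos hy hz
  have h4 : t + y*z ≤ 0 := by
    nlinarith [mul_nonneg (by linarith : (0:ℝ) ≤ x - (y+z)) (by linarith : (0:ℝ) ≤ x + (y+z))]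
  have h5 : y^2*z^2 ≤ t^2 := by
    nlinarith [mul_nonneg (by linarith : (0:ℝ) ≤ -t - y*z) (by linarith : (0:ℝ) ≤ -t + y*z)]
  linarith [h2, hd2, h5]

set_option maxHeartbeats 4000000 in
/-- For any nondegenerate triangle, with `ρ = r/R`, the incenter satisfies
`X₁ = (6/(ρ+2)) X₂ + (2ρ/(ρ+2)) X₃ − ((ρ+4)/(ρ+2)) X₉`, an affine combination
of the barycenter, circumcenter, and Mittenpunkt. -/
theorem stmt7 (A B C X₃ : ℂ) (a b c r R ρ : ℝ)
    (ha : a = ‖B - C‖) (hb : b = ‖C - A‖)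
    (hc : c = ‖A - B‖)
    (hnd : ((B - A) * (starRingEnd ℂ) (C - A)).im ≠ 0)
    (hRA : ‖X₃ - A‖ = R) (hRB : ‖X₃ - B‖ = R)
    (hRC : ‖X₃ - C‖ = R)
    (hr : r = |((B - A) * (starRingEnd ℂ) (C - A)).im| / (a + b + c))
    (hρ : ρ = r / R)
    (X₁ X₂ X₉ : ℂ)
    (hX₁ : X₁ = (a / (a + b + c)) • A + (b / (a + b + c)) • B + (c / (a + b + c)) • C)
    (hX₂ : X₂ = (A + B + C) / 3)
    (hX₉ : X₉ = ((a * (b + c - a)) • A + (b * (c + a - b)) • B + (c * (a + b - c)) • C)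
        / ((a * (b + c - a) + b * (c + a - b) + c * (a + b - c) : ℝ) : ℂ)) :
    X₁ = (6 / (ρ + 2)) • X₂ + (2 * ρ / (ρ + 2)) • X₃ + (-(ρ + 4) / (ρ + 2)) • X₉ := by
  have sqA : ∀ z : ℂ, ‖z‖^2 = z.re^2 + z.im^2 := fun z => by
    rw [Complex.sq_norm, Complex.normSq_apply]; ring
  have him : ((B - A) * (starRingEnd ℂ) (C - A)).im = -((B.re - A.re) * (C.im - A.im) - (B.im - A.im) * (C.re - A.re)) := by
    simp [Complex.mul_im, Complex.sub_re, Complex.sub_im]; ring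
  have hdne : ((B.re - A.re) * (C.im - A.im) - (B.im - A.im) * (C.re - A.re)) ≠ 0 := by
    intro h; apply hnd; rw [him, h, neg_zero]
  have hBC : B ≠ C := by intro h; apply hdne; rw [h]; ring
  have hCA : C ≠ A := by intro h; apply hdne; rw [h]; ring
  have hAB : A ≠ B := by intro h; apply hdne; rw [h]; ring
  have haP : 0 < a := by rw [ha]; exact norm_pos_iff.mpr (sub_ne_zero.mpr hBC)
  have hbP : 0 < b := by rw [hb]; exact norm_pos_iff.mpr (sub_ne_zero.mpr hCA)
  have hcP : 0 < c := by rw [hc]; exact norm_pos_iff.mpr (sub_ne_zero.mpr hAB)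
  have hsP : 0 < a + b + c := by linarith
  have ha2 : a^2 = (B.re - C.re)^2 + (B.im - C.im)^2 := by
    rw [ha, sqA]; simp [Complex.sub_re, Complex.sub_im]
  have hb2 : b^2 = (C.re - A.re)^2 + (C.im - A.im)^2 := by
    rw [hb, sqA]; simp [Complex.sub_re, Complex.sub_im]
  have hc2 : c^2 = (A.re - B.re)^2 + (A.im - B.im)^2 := by
    rw [hc, sqA]; simp [Complex.sub_re, Complex.sub_im]
  -- triangle inequalities
  have htA : 0 < b + c - a := by
    refine tri_aux a b c (B.im*C.im + B.re*C.re + (-1:ℝ)*A.im*C.im + (-1:ℝ)*A.im*B.im + A.im^2 + (-1:ℝ)*A.re*C.re + (-1:ℝ)*A.re*B.re + A.re^2) ((B.re - A.re) * (C.im - A.im) - (B.im - A.im) * (C.re - A.re)) haP.le hbP hcP hdne ?_ ?_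
    · linear_combination ha2 - hb2 - hc2
    · linear_combination (c^2) * hb2 + (C.im^2 + C.re^2 + (-2:ℝ)*A.im*C.im + A.im^2 + (-2:ℝ)*A.re*C.re + A.re^2) * hc2
  have htB : 0 < c + a - b := by
    refine tri_aux b c a ((-1:ℝ)*B.im*C.im + B.im^2 + (-1:ℝ)*B.re*C.re + B.re^2 + A.im*C.im + (-1:ℝ)*A.im*B.im + A.re*C.re + (-1:ℝ)*A.re*B.re) ((B.re - A.re) * (C.im - A.im) - (B.im - A.im) * (C.re - A.re)) hbP.le hcP haP hdne ?_ ?_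
    · linear_combination hb2 - hc2 - ha2
    · linear_combination (c^2) * ha2 + (C.im^2 + C.re^2 + (-2:ℝ)*B.im*C.im + B.im^2 + (-2:ℝ)*B.re*C.re + B.re^2) * hc2
  have htC : 0 < a + b - c := by
    refine tri_aux c a b (C.im^2 + C.re^2 + (-1:ℝ)*B.im*C.im + (-1:ℝ)*B.re*C.re + (-1:ℝ)*A.im*C.im + A.im*B.im + (-1:ℝ)*A.re*C.re + A.re*B.re) ((B.re - A.re) * (C.im - A.im) - (B.im - A.im) * (C.re - A.re)) hcP.le haP hbP hdne ?_ ?_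
    · linear_combination hc2 - ha2 - hb2
    · linear_combination (b^2) * ha2 + (C.im^2 + C.re^2 + (-2:ℝ)*B.im*C.im + B.im^2 + (-2:ℝ)*B.re*C.re + B.re^2) * hb2
  -- circumcenter equations
  have eRA : (X₃.re - A.re)^2 + (X₃.im - A.im)^2 = R^2 := by
    rw [← hRA, sqA]; simp [Complex.sub_re, Complex.sub_im]
  have eRB : (X₃.re - B.re)^2 + (X₃.im - B.im)^2 = R^2 := by
    rw [← hRB, sqA]; simp [Complex.sub_re, Complex.sub_im]
  have eRC : (X₃.re - C.re)^2 + (X₃.im - C.im)^2 = R^2 := by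
    rw [← hRC, sqA]; simp [Complex.sub_re, Complex.sub_im]
  have e1 : (X₃.re - A.re)^2 + (X₃.im - A.im)^2 = (X₃.re - B.re)^2 + (X₃.im - B.im)^2 :=
    eRA.trans eRB.symm
  have e2 : (X₃.re - A.re)^2 + (X₃.im - A.im)^2 = (X₃.re - C.re)^2 + (X₃.im - C.im)^2 :=
    eRA.trans eRC.symm
  have hw1 : 2*((B.re - A.re) * (C.im - A.im) - (B.im - A.im) * (C.re - A.re))*(X₃.re - A.re) = c^2*(C.im - A.im) - b^2*(B.im - A.im) := by
    linear_combination (C.im - A.im)*e1 - (B.im - A.im)*e2 + (B.im - A.im)*hb2 - (C.im - A.im)*hc2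
  have hw2 : 2*((B.re - A.re) * (C.im - A.im) - (B.im - A.im) * (C.re - A.re))*(X₃.im - A.im) = b^2*(B.re - A.re) - c^2*(C.re - A.re) := by
    linear_combination (B.re - A.re)*e2 - (C.re - A.re)*e1 + (C.re - A.re)*hc2 - (B.re - A.re)*hb2
  -- radius positivity
  have hRnn : 0 ≤ R := by rw [← hRA]; exact norm_nonneg _
  have hRne : R ≠ 0 := by
    intro h; apply hAB
    have h1 : X₃ - A = 0 := norm_eq_zero.mp (by rw [hRA, h])
    have h2 : X₃ - B = 0 := norm_eq_zero.mp (by rw [hRB, h])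
    have := (sub_eq_zero.mp h1).symm.trans (sub_eq_zero.mp h2)
    exact this.symm ▸ rfl
  have hRpos : 0 < R := lt_of_le_of_ne hRnn (Ne.symm hRne)
  have hrnn : 0 ≤ r := by rw [hr]; exact div_nonneg (abs_nonneg _) hsP.le
  -- inradius squared relation
  have hr1 : r * (a + b + c) = |((B - A) * (starRingEnd ℂ) (C - A)).im| := by
    rw [hr]; field_simp
  have hr2 : r^2*(a+b+c)^2 = ((B.re - A.re) * (C.im - A.im) - (B.im - A.im) * (C.re - A.re))^2 := by
    have h2 : (r*(a+b+c))^2 = |((B - A) * (starRingEnd ℂ) (C - A)).im|^2 := by rw [hr1]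
    rw [_root_.sq_abs, him] at h2
    linear_combination h2
  -- 4 R² d² = a² b² c²
  have hRd : 4*R^2*((B.re - A.re) * (C.im - A.im) - (B.im - A.im) * (C.re - A.re))^2 = a^2*b^2*c^2 := by
    linear_combination ((-4:ℝ)*B.im^2*C.re^2 + (8:ℝ)*B.re*B.im*C.re*C.im + (-4:ℝ)*B.re^2*C.im^2 + (8:ℝ)*A.im*B.im*C.re^2 + (-8:ℝ)*A.im*B.re*C.re*C.im + (-8:ℝ)*A.im*B.re*B.im*C.re + (8:ℝ)*A.im*B.re^2*C.im + (-4:ℝ)*A.im^2*C.re^2 + (8:ℝ)*A.im^2*B.re*C.re + (-4:ℝ)*A.im^2*B.re^2 + (-8:ℝ)*A.re*B.im*C.re*C.im + (8:ℝ)*A.re*B.im^2*C.re + (8:ℝ)*A.re*B.re*C.im^2 + (-8:ℝ)*A.re*B.re*B.im*C.im + (8:ℝ)*A.re*A.im*C.re*C.im + (-8:ℝ)*A.re*A.im*B.im*C.re + (-8:ℝ)*A.re*A.im*B.re*C.im + (8:ℝ)*A.re*A.im*B.re*B.im + (-4:ℝ)*A.re^2*C.im^2 + (8:ℝ)*A.re^2*B.im*C.im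 + (-4:ℝ)*A.re^2*B.im^2) * eRA + (C.im*c^2 + (-1:ℝ)*B.im*b^2 + (-2:ℝ)*B.im*C.re*X₃.re + (2:ℝ)*B.re*C.im*X₃.re + (-1:ℝ)*A.im*c^2 + A.im*b^2 + (2:ℝ)*A.im*C.re*X₃.re + (-2:ℝ)*A.im*B.re*X₃.re + (-2:ℝ)*A.re*C.im*X₃.re + (2:ℝ)*A.re*B.im*X₃.re + (2:ℝ)*A.re*B.im*C.re + (-2:ℝ)*A.re*B.re*C.im + (-2:ℝ)*A.re*A.im*C.re + (2:ℝ)*A.re*A.im*B.re + (2:ℝ)*A.re^2*C.im + (-2:ℝ)*A.re^2*B.im) * hw1 + ((-1:ℝ)*C.re*c^2 + (-2:ℝ)*B.im*C.re*X₃.im + B.re*b^2 + (2:ℝ)*B.re*C.im*X₃.im + (2:ℝ)*A.im*C.re*X₃.im + (2:ℝ)*A.im*B.im*C.re + (-2:ℝ)*A.im*B.re*X₃.im + (-2:ℝ)*A.im*B.re*C.im + (-2:ℝ)*A.im^2*C.re + (2:ℝ)*A.im^2*B.re + A.re*c^2 + (-1:ℝ)*A.re*b^2 + (-2:ℝ)*A.re*C.im*X₃.im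 + (2:ℝ)*A.re*B.im*X₃.im + (2:ℝ)*A.re*A.im*C.im + (-2:ℝ)*A.re*A.im*B.im) * hw2 + ((-1:ℝ)*b^2*c^2) * ha2 + ((-1:ℝ)*C.im^2*c^2 + (-1:ℝ)*C.re^2*c^2 + (-1:ℝ)*B.im^2*c^2 + B.im^2*b^2 + B.im^2*C.im^2 + B.im^2*C.re^2 + (-1:ℝ)*B.re^2*c^2 + B.re^2*b^2 + B.re^2*C.im^2 + B.re^2*C.re^2 + (2:ℝ)*A.im*C.im*c^2 + (2:ℝ)*A.im*B.im*c^2 + (-2:ℝ)*A.im*B.im*b^2 + (-2:ℝ)*A.im*B.im*C.im^2 + (-2:ℝ)*A.im*B.im*C.re^2 + (-2:ℝ)*A.im*B.im^2*C.im + (-2:ℝ)*A.im*B.re^2*C.im + (-2:ℝ)*A.im^2*c^2 + A.im^2*b^2 + A.im^2*C.im^2 + A.im^2*C.re^2 + (4:ℝ)*A.im^2*B.im*C.im + A.im^2*B.im^2 + A.im^2*B.re^2 + (-2:ℝ)*A.im^3*C.im + (-2:ℝ)*A.im^3*B.im + A.im^4 + (2:ℝ)*A.re*C.re*c^2 + (-2:ℝ)*A.re*B.im^2*C.re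 + (2:ℝ)*A.re*B.re*c^2 + (-2:ℝ)*A.re*B.re*b^2 + (-2:ℝ)*A.re*B.re*C.im^2 + (-2:ℝ)*A.re*B.re*C.re^2 + (-2:ℝ)*A.re*B.re^2*C.re + (4:ℝ)*A.re*A.im*B.im*C.re + (4:ℝ)*A.re*A.im*B.re*C.im + (-2:ℝ)*A.re*A.im^2*C.re + (-2:ℝ)*A.re*A.im^2*B.re + (-2:ℝ)*A.re^2*c^2 + A.re^2*b^2 + A.re^2*C.im^2 + A.re^2*C.re^2 + A.re^2*B.im^2 + (4:ℝ)*A.re^2*B.re*C.re + A.re^2*B.re^2 + (-2:ℝ)*A.re^2*A.im*C.im + (-2:ℝ)*A.re^2*A.im*B.im + (2:ℝ)*A.re^2*A.im^2 + (-2:ℝ)*A.re^3*C.re + (-2:ℝ)*A.re^3*B.re + A.re^4) * hb2 + (C.im^2*c^2 + (-1:ℝ)*C.im^4 + C.re^2*c^2 + (-2:ℝ)*C.re^2*C.im^2 + (-1:ℝ)*C.re^4 + (-2:ℝ)*A.im*C.im*c^2 + (4:ℝ)*A.im*C.im^3 + (4:ℝ)*A.im*C.re^2*C.im + A.im^2*c^2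 + (-6:ℝ)*A.im^2*C.im^2 + (-2:ℝ)*A.im^2*C.re^2 + (4:ℝ)*A.im^3*C.im + (-1:ℝ)*A.im^4 + (-2:ℝ)*A.re*C.re*c^2 + (4:ℝ)*A.re*C.re*C.im^2 + (4:ℝ)*A.re*C.re^3 + (-8:ℝ)*A.re*A.im*C.re*C.im + (4:ℝ)*A.re*A.im^2*C.re + A.re^2*c^2 + (-2:ℝ)*A.re^2*C.im^2 + (-6:ℝ)*A.re^2*C.re^2 + (4:ℝ)*A.re^2*A.im*C.im + (-2:ℝ)*A.re^2*A.im^2 + (4:ℝ)*A.re^3*C.re + (-1:ℝ)*A.re^4) * hc2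
  -- 2 R r s = a b c
  have hRr : 2*R*r*(a+b+c) = a*b*c := by
    have h2 : (2*R*r*(a+b+c))^2 = (a*b*c)^2 := by
      linear_combination 4*R^2*hr2 + hRd
    have h3 : (2*R*r*(a+b+c) - a*b*c)*(2*R*r*(a+b+c) + a*b*c) = 0 := by linear_combination h2
    rcases mul_eq_zero.mp h3 with h4 | h4
    · linarith
    · exfalso
      have habc0 : 0 < a*b*c := mul_pos (mul_pos haP hbP) hcP
      have h5 : 0 ≤ 2*R*r*(a+b+c) :=
        mul_nonneg (mul_nonneg (mul_nonneg (by norm_num : (0:ℝ) ≤ 2) hRnn) hrnn) hsP.le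
      linarith
  -- Heron
  have hP : (b+c-a)*(c+a-b)*(a+b-c)*(a+b+c) = 4*r^2*(a+b+c)^2 := by
    linear_combination (-4:ℝ) * hr2 + ((2:ℝ)*c^2 + (2:ℝ)*b^2 + (-1:ℝ)*a^2 + (-1:ℝ)*C.im^2 + (-1:ℝ)*C.re^2 + (2:ℝ)*B.im*C.im + (-1:ℝ)*B.im^2 + (2:ℝ)*B.re*C.re + (-1:ℝ)*B.re^2) * ha2 + ((2:ℝ)*c^2 + (-1:ℝ)*b^2 + C.im^2 + C.re^2 + (-4:ℝ)*B.im*C.im + (2:ℝ)*B.im^2 + (-4:ℝ)*B.re*C.re + (2:ℝ)*B.re^2 + (2:ℝ)*A.im*C.im + (-1:ℝ)*A.im^2 + (2:ℝ)*A.re*C.re + (-1:ℝ)*A.re^2) * hb2 + ((-1:ℝ)*c^2 + (4:ℝ)*C.im^2 + (4:ℝ)*C.re^2 + (-4:ℝ)*B.im*C.im + B.im^2 + (-4:ℝ)*B.re*C.re + B.re^2 + (-4:ℝ)*A.im*C.im + (2:ℝ)*A.im*B.im + A.im^2 + (-4:ℝ)*A.re*C.re + (2:ℝ)*A.re*B.re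 + A.re^2) * hc2
  have hρ'' : ρ*(2*a*b*c) = 4*r^2*(a+b+c) := by
    rw [hρ]; field_simp; linear_combination -2*r*hRr
  have hρ' : ρ*(2*a*b*c) = (b+c-a)*(c+a-b)*(a+b-c) := by
    apply mul_right_cancel₀ (ne_of_gt hsP)
    linear_combination (a+b+c)*hρ'' - hP
  -- nonvanishing quantities
  have habc : 0 < a*b*c := by positivity
  have hρnn : 0 ≤ ρ := by rw [hρ]; exact div_nonneg hrnn hRpos.le
  have hρ2 : (0:ℝ) < ρ + 2 := by linarith
  have hDz : 0 < (b+c-a)*(c+a-b)*(a+b-c) + 4*(a*b*c) := by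
    have := mul_pos (mul_pos htA htB) htC; linarith
  have hQ : 0 < a*(b+c-a) + b*(c+a-b) + c*(a+b-c) := by
    have h1 := mul_pos haP htA; have h2 := mul_pos hbP htB; have h3 := mul_pos hcP htC
    linarith
  have hF : 0 < (b+c-a)*(c+a-b)*(a+b-c)*(a+b+c) :=
    mul_pos (mul_pos (mul_pos htA htB) htC) hsP
  -- coefficient rewrites
  have hcoef1 : 6 / (ρ + 2) = 12*(a*b*c) / ((b+c-a)*(c+a-b)*(a+b-c) + 4*(a*b*c)) := by
    rw [div_eq_div_iff (ne_of_gt hρ2) (ne_of_gt hDz)]; linear_combination -6*hρ'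
  have hcoef2 : 2 * ρ / (ρ + 2) = 2*((b+c-a)*(c+a-b)*(a+b-c)) / ((b+c-a)*(c+a-b)*(a+b-c) + 4*(a*b*c)) := by
    rw [div_eq_div_iff (ne_of_gt hρ2) (ne_of_gt hDz)]; linear_combination 4*hρ'
  have hcoef3 : -(ρ + 4) / (ρ + 2) = -((b+c-a)*(c+a-b)*(a+b-c) + 8*(a*b*c)) / ((b+c-a)*(c+a-b)*(a+b-c) + 4*(a*b*c)) := by
    rw [div_eq_div_iff (ne_of_gt hρ2) (ne_of_gt hDz)]; linear_combination 2*hρ'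
  -- circumcenter in barycentric (smul) form
  have hX₃C : (((b+c-a)*(c+a-b)*(a+b-c)*(a+b+c) : ℝ)) • X₃
      = (a^2*(b^2+c^2-a^2)) • A + (b^2*(c^2+a^2-b^2)) • B + (c^2*(a^2+b^2-c^2)) • C := by
    apply Complex.ext
    · simp only [Complex.real_smul, Complex.mul_re, Complex.mul_im, Complex.add_re,
        Complex.add_im, Complex.ofReal_re, Complex.ofReal_im]
      linear_combination ((-2:ℝ)*B.im*C.re + (2:ℝ)*B.re*C.im + (2:ℝ)*A.im*C.re + (-2:ℝ)*A.im*B.re + (-2:ℝ)*A.re*C.im + (2:ℝ)*A.re*B.im) * hw1 + ((2:ℝ)*X₃.re*c^2 + (2:ℝ)*X₃.re*b^2 + (-1:ℝ)*X₃.re*a^2 + (-1:ℝ)*C.im^2*X₃.re + (-1:ℝ)*C.re*c^2 + (-1:ℝ)*C.re^2*X₃.re + (2:ℝ)*B.im*C.im*X₃.re + (-1:ℝ)*B.im^2*X₃.re + (-1:ℝ)*B.re*b^2 + (2:ℝ)*B.re*C.re*X₃.re + (-1:ℝ)*B.re^2*X₃.re + (-1:ℝ)*A.re*c^2 + (-1:ℝ)*A.re*b^2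 + A.re*a^2 + A.re*C.im^2 + A.re*C.re^2 + (-2:ℝ)*A.re*B.im*C.im + A.re*B.im^2 + (-2:ℝ)*A.re*B.re*C.re + A.re*B.re^2) * ha2 + ((2:ℝ)*X₃.re*c^2 + (-1:ℝ)*X₃.re*b^2 + C.im^2*X₃.re + (-1:ℝ)*C.re*c^2 + C.re^2*X₃.re + (-4:ℝ)*B.im*C.im*X₃.re + (2:ℝ)*B.im^2*X₃.re + (2:ℝ)*B.im^2*C.re + (-1:ℝ)*B.re*c^2 + B.re*b^2 + (-4:ℝ)*B.re*C.re*X₃.re + (-1:ℝ)*B.re*B.im^2 + (2:ℝ)*B.re^2*X₃.re + (2:ℝ)*B.re^2*C.re + (-1:ℝ)*B.re^3 + (2:ℝ)*A.im*C.im*X₃.re + (-4:ℝ)*A.im*B.im*C.re + (2:ℝ)*A.im*B.re*B.im + (-1:ℝ)*A.im^2*X₃.re + (2:ℝ)*A.im^2*C.re + (-1:ℝ)*A.im^2*B.re + (-1:ℝ)*A.re*C.im^2 + (2:ℝ)*A.re*C.re*X₃.re + (-1:ℝ)*A.re*C.re^2 + (4:ℝ)*A.re*B.im*C.im + (-3:ℝ)*A.re*B.im^2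 + (-1:ℝ)*A.re*B.re^2 + (-2:ℝ)*A.re*A.im*C.im + (2:ℝ)*A.re*A.im*B.im + (-1:ℝ)*A.re^2*X₃.re + A.re^2*B.re) * hb2 + ((-1:ℝ)*X₃.re*c^2 + (4:ℝ)*C.im^2*X₃.re + C.re*c^2 + (-2:ℝ)*C.re*C.im^2 + (4:ℝ)*C.re^2*X₃.re + (-2:ℝ)*C.re^3 + (-4:ℝ)*B.im*C.im*X₃.re + B.im^2*X₃.re + B.re*C.im^2 + (-4:ℝ)*B.re*C.re*X₃.re + B.re*C.re^2 + B.re^2*X₃.re + (-4:ℝ)*A.im*C.im*X₃.re + (4:ℝ)*A.im*C.re*C.im + (2:ℝ)*A.im*B.im*X₃.re + (-2:ℝ)*A.im*B.re*C.im + A.im^2*X₃.re + (-2:ℝ)*A.im^2*C.re + A.im^2*B.re + (-3:ℝ)*A.re*C.im^2 + (-4:ℝ)*A.re*C.re*X₃.re + A.re*C.re^2 + (4:ℝ)*A.re*B.im*C.im + (-1:ℝ)*A.re*B.im^2 + (2:ℝ)*A.re*B.re*X₃.re + (2:ℝ)*A.re*B.re*C.re + (-1:ℝ)*A.re*B.re^2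 + (2:ℝ)*A.re*A.im*C.im + (-2:ℝ)*A.re*A.im*B.im + A.re^2*X₃.re + (-1:ℝ)*A.re^2*B.re) * hc2
    · simp only [Complex.real_smul, Complex.mul_re, Complex.mul_im, Complex.add_re,
        Complex.add_im, Complex.ofReal_re, Complex.ofReal_im]
      linear_combination ((-2:ℝ)*B.im*C.re + (2:ℝ)*B.re*C.im + (2:ℝ)*A.im*C.re + (-2:ℝ)*A.im*B.re + (-2:ℝ)*A.re*C.im + (2:ℝ)*A.re*B.im) * hw2 + ((2:ℝ)*X₃.im*c^2 + (2:ℝ)*X₃.im*b^2 + (-1:ℝ)*X₃.im*a^2 + (-1:ℝ)*C.im*c^2 + (-1:ℝ)*C.im^2*X₃.im + (-1:ℝ)*C.re^2*X₃.im + (-1:ℝ)*B.im*b^2 + (2:ℝ)*B.im*C.im*X₃.im + (-1:ℝ)*B.im^2*X₃.im + (2:ℝ)*B.re*C.re*X₃.im + (-1:ℝ)*B.re^2*X₃.im + (-1:ℝ)*A.im*c^2 + (-1:ℝ)*A.im*b^2 + A.im*a^2 + A.im*C.im^2 + A.im*C.re^2 + (-2:ℝ)*A.im*B.im*C.im + A.im*B.im^2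 + (-2:ℝ)*A.im*B.re*C.re + A.im*B.re^2) * ha2 + ((2:ℝ)*X₃.im*c^2 + (-1:ℝ)*X₃.im*b^2 + (-1:ℝ)*C.im*c^2 + C.im^2*X₃.im + C.re^2*X₃.im + (-1:ℝ)*B.im*c^2 + B.im*b^2 + (-4:ℝ)*B.im*C.im*X₃.im + (2:ℝ)*B.im^2*X₃.im + (2:ℝ)*B.im^2*C.im + (-1:ℝ)*B.im^3 + (-4:ℝ)*B.re*C.re*X₃.im + (2:ℝ)*B.re^2*X₃.im + (2:ℝ)*B.re^2*C.im + (-1:ℝ)*B.re^2*B.im + (2:ℝ)*A.im*C.im*X₃.im + (-1:ℝ)*A.im*C.im^2 + (-1:ℝ)*A.im*C.re^2 + (-1:ℝ)*A.im*B.im^2 + (4:ℝ)*A.im*B.re*C.re + (-3:ℝ)*A.im*B.re^2 + (-1:ℝ)*A.im^2*X₃.im + A.im^2*B.im + (2:ℝ)*A.re*C.re*X₃.im + (-4:ℝ)*A.re*B.re*C.im + (2:ℝ)*A.re*B.re*B.im + (-2:ℝ)*A.re*A.im*C.re + (2:ℝ)*A.re*A.im*B.re + (-1:ℝ)*A.re^2*X₃.im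 + (2:ℝ)*A.re^2*C.im + (-1:ℝ)*A.re^2*B.im) * hb2 + ((-1:ℝ)*X₃.im*c^2 + C.im*c^2 + (4:ℝ)*C.im^2*X₃.im + (-2:ℝ)*C.im^3 + (4:ℝ)*C.re^2*X₃.im + (-2:ℝ)*C.re^2*C.im + (-4:ℝ)*B.im*C.im*X₃.im + B.im*C.im^2 + B.im*C.re^2 + B.im^2*X₃.im + (-4:ℝ)*B.re*C.re*X₃.im + B.re^2*X₃.im + (-4:ℝ)*A.im*C.im*X₃.im + A.im*C.im^2 + (-3:ℝ)*A.im*C.re^2 + (2:ℝ)*A.im*B.im*X₃.im + (2:ℝ)*A.im*B.im*C.im + (-1:ℝ)*A.im*B.im^2 + (4:ℝ)*A.im*B.re*C.re + (-1:ℝ)*A.im*B.re^2 + A.im^2*X₃.im + (-1:ℝ)*A.im^2*B.im + (-4:ℝ)*A.re*C.re*X₃.im + (4:ℝ)*A.re*C.re*C.im + (-2:ℝ)*A.re*B.im*C.re + (2:ℝ)*A.re*B.re*X₃.im + (2:ℝ)*A.re*A.im*C.re + (-2:ℝ)*A.re*A.im*B.re + A.re^2*X₃.im + (-2:ℝ)*A.re^2*C.im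 + A.re^2*B.im) * hc2
  have hX₃' : X₃ = (((b+c-a)*(c+a-b)*(a+b-c)*(a+b+c) : ℝ))⁻¹ •
      ((a^2*(b^2+c^2-a^2)) • A + (b^2*(c^2+a^2-b^2)) • B + (c^2*(a^2+b^2-c^2)) • C) := by
    rw [← hX₃C, smul_smul, inv_mul_cancel₀ (ne_of_gt hF), one_smul]
  have hX₂' : X₂ = (3:ℝ)⁻¹ • (A + B + C) := by
    rw [hX₂, Complex.real_smul]; push_cast; ring
  have hX₉' : X₉ = ((a*(b+c-a) + b*(c+a-b) + c*(a+b-c) : ℝ))⁻¹ •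
      ((a * (b + c - a)) • A + (b * (c + a - b)) • B + (c * (a + b - c)) • C) := by
    rw [hX₉]
    simp only [Complex.real_smul]
    push_cast
    rw [div_eq_mul_inv]
    ring
  rw [hcoef1, hcoef2, hcoef3, hX₁, hX₂', hX₉', hX₃']
  match_scalars
  · field_simp
    ring
  · field_simp
    ring
  · field_simp
    ring
end

section
/- For any triangle, the Mittenpunkt X₉ satisfies X₉ = ((−ρ−2) X₁ + 6 X₂ + 2ρ X₃)/(ρ + 4), where ρ = r/R is the inradius-to-circumradius ratio, X₁ the incenter, X₂ the barycenter, and X₃ the circumcenter. -/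
open Complex

set_option maxHeartbeats 2000000

/-- For any nondegenerate triangle, with `ρ = r/R`, the Mittenpunkt satisfies
`X₉ = ((−ρ−2) X₁ + 6 X₂ + 2ρ X₃)/(ρ+4)`, an affine combination
of the barycenter, circumcenter, and Mittenpunkt. -/
theorem stmt8 (A B C X₃ : ℂ) (a b c r R ρ : ℝ)
    (ha : a = ‖B - C‖) (hb : b = ‖C - A‖)
    (hc : c = ‖A - B‖)
    (hnd : ((B - A) * (starRingEnd ℂ) (C - A)).im ≠ 0)
    (hRA : ‖X₃ - A‖ = R) (hRB : ‖X₃ - B‖ = R)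
    (hRC : ‖X₃ - C‖ = R)
    (hr : r = |((B - A) * (starRingEnd ℂ) (C - A)).im| / (a + b + c))
    (hρ : ρ = r / R)
    (X₁ X₂ X₉ : ℂ)
    (hX₁ : X₁ = (a / (a + b + c)) • A + (b / (a + b + c)) • B + (c / (a + b + c)) • C)
    (hX₂ : X₂ = (A + B + C) / 3)
    (hX₉ : X₉ = ((a * (b + c - a)) • A + (b * (c + a - b)) • B + (c * (a + b - c)) • C)
        / ((a * (b + c - a) + b * (c + a - b) + c * (a + b - c) : ℝ) : ℂ)) :
    X₉ = ((-ρ - 2) • X₁ + (6:ℝ) • X₂ + (2 * ρ) • X₃) / ((ρ + 4 : ℝ) : ℂ) := by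
  set T : ℝ := ((B - A) * (starRingEnd ℂ) (C - A)).im with hTdef
  -- squared side lengths as products with conjugates
  have h1 : (a:ℂ)^2 = ((B - C) * ((starRingEnd ℂ) B - (starRingEnd ℂ) C)) := by
    rw [← map_sub, Complex.mul_conj]
    norm_cast
    rw [ha, Complex.sq_norm]
  have h2 : (b:ℂ)^2 = ((C - A) * ((starRingEnd ℂ) C - (starRingEnd ℂ) A)) := by
    rw [← map_sub, Complex.mul_conj]
    norm_cast
    rw [hb, Complex.sq_norm]
  have h3 : (c:ℂ)^2 = ((A - B) * ((starRingEnd ℂ) A - (starRingEnd ℂ) B)) := by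
    rw [← map_sub, Complex.mul_conj]
    norm_cast
    rw [hc, Complex.sq_norm]
  -- the imaginary part as a complex expression
  have hcz : (starRingEnd ℂ) ((B - A) * (starRingEnd ℂ) (C - A))
      = ((starRingEnd ℂ) B - (starRingEnd ℂ) A) * (C - A) := by
    rw [map_mul, Complex.conj_conj, map_sub]
  have hsc := Complex.sub_conj ((B - A) * (starRingEnd ℂ) (C - A))
  rw [hcz, ← hTdef, map_sub] at hsc
  push_cast at hsc
  have ht : (B - A) * ((starRingEnd ℂ) C - (starRingEnd ℂ) A) - ((starRingEnd ℂ) B - (starRingEnd ℂ) A) * (C - A) = (2 * (T:ℂ) * Complex.I) := by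
    linear_combination hsc
  -- circumcenter equations
  have eA : (X₃ - A) * ((starRingEnd ℂ) X₃ - (starRingEnd ℂ) A) = (R:ℂ)^2 := by
    rw [← map_sub, Complex.mul_conj]
    norm_cast
    rw [← Complex.sq_norm, hRA]
  have eB : (X₃ - B) * ((starRingEnd ℂ) X₃ - (starRingEnd ℂ) B) = (R:ℂ)^2 := by
    rw [← map_sub, Complex.mul_conj]
    norm_cast
    rw [← Complex.sq_norm, hRB]
  have eC : (X₃ - C) * ((starRingEnd ℂ) X₃ - (starRingEnd ℂ) C) = (R:ℂ)^2 := by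
    rw [← map_sub, Complex.mul_conj]
    norm_cast
    rw [← Complex.sq_norm, hRC]
  have hE1 : (X₃ - A) * ((starRingEnd ℂ) X₃ - (starRingEnd ℂ) A) = (X₃ - B) * ((starRingEnd ℂ) X₃ - (starRingEnd ℂ) B) := eA.trans eB.symm
  have hE2 : (X₃ - A) * ((starRingEnd ℂ) X₃ - (starRingEnd ℂ) A) = (X₃ - C) * ((starRingEnd ℂ) X₃ - (starRingEnd ℂ) C) := eA.trans eC.symm
  -- linear relations for the circumcenter and its conjugate
  have s1 : X₃ * -(2 * (T:ℂ) * Complex.I) = (A * (starRingEnd ℂ) A * (B - C) + B * (starRingEnd ℂ) B * (C - A) + C * (starRingEnd ℂ) C * (A - B)) := by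
    linear_combination (C - A) * hE1 - (B - A) * hE2 + X₃ * ht
  have s2 : (starRingEnd ℂ) X₃ * (2 * (T:ℂ) * Complex.I) = (A * (starRingEnd ℂ) A * ((starRingEnd ℂ) B - (starRingEnd ℂ) C) + B * (starRingEnd ℂ) B * ((starRingEnd ℂ) C - (starRingEnd ℂ) A) + C * (starRingEnd ℂ) C * ((starRingEnd ℂ) A - (starRingEnd ℂ) B)) := by
    linear_combination ((starRingEnd ℂ) C - (starRingEnd ℂ) A) * hE1 - ((starRingEnd ℂ) B - (starRingEnd ℂ) A) * hE2 - (starRingEnd ℂ) X₃ * ht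
  -- key: (2RT)^2 = (abc)^2
  have ka : (R:ℂ)^2 * -((2 * (T:ℂ) * Complex.I)^2)
      = ((X₃ - A) * -(2 * (T:ℂ) * Complex.I)) * (((starRingEnd ℂ) X₃ - (starRingEnd ℂ) A) * (2 * (T:ℂ) * Complex.I)) := by
    linear_combination ((2 * (T:ℂ) * Complex.I)^2) * eA
  have kb : (X₃ - A) * -(2 * (T:ℂ) * Complex.I) = (A * (starRingEnd ℂ) A * (B - C) + B * (starRingEnd ℂ) B * (C - A) + C * (starRingEnd ℂ) C * (A - B)) + A * (2 * (T:ℂ) * Complex.I) := by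
    linear_combination s1
  have kc : ((starRingEnd ℂ) X₃ - (starRingEnd ℂ) A) * (2 * (T:ℂ) * Complex.I) = (A * (starRingEnd ℂ) A * ((starRingEnd ℂ) B - (starRingEnd ℂ) C) + B * (starRingEnd ℂ) B * ((starRingEnd ℂ) C - (starRingEnd ℂ) A) + C * (starRingEnd ℂ) C * ((starRingEnd ℂ) A - (starRingEnd ℂ) B)) - (starRingEnd ℂ) A * (2 * (T:ℂ) * Complex.I) := by
    linear_combination s2
  rw [kb, kc] at ka
  have kd : ((A * (starRingEnd ℂ) A * (B - C) + B * (starRingEnd ℂ) B * (C - A) + C * (starRingEnd ℂ) C * (A - B)) + A * (2 * (T:ℂ) * Complex.I)) * ((A * (starRingEnd ℂ) A * ((starRingEnd ℂ) B - (starRingEnd ℂ) C) + B * (starRingEnd ℂ) B * ((starRingEnd ℂ) C - (starRingEnd ℂ) A) + C * (starRingEnd ℂ) C * ((starRingEnd ℂ) A - (starRingEnd ℂ) B)) - (starRingEnd ℂ) A * (2 * (T:ℂ) * Complex.I))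
      = ((A * (starRingEnd ℂ) A * (B - C) + B * (starRingEnd ℂ) B * (C - A) + C * (starRingEnd ℂ) C * (A - B)) + A * ((B - A) * ((starRingEnd ℂ) C - (starRingEnd ℂ) A) - ((starRingEnd ℂ) B - (starRingEnd ℂ) A) * (C - A))) * ((A * (starRingEnd ℂ) A * ((starRingEnd ℂ) B - (starRingEnd ℂ) C) + B * (starRingEnd ℂ) B * ((starRingEnd ℂ) C - (starRingEnd ℂ) A) + C * (starRingEnd ℂ) C * ((starRingEnd ℂ) A - (starRingEnd ℂ) B)) - (starRingEnd ℂ) A * ((B - A) * ((starRingEnd ℂ) C - (starRingEnd ℂ) A) - ((starRingEnd ℂ) B - (starRingEnd ℂ) A) * (C - A))) := by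
    linear_combination -(A * (A * (starRingEnd ℂ) A * ((starRingEnd ℂ) B - (starRingEnd ℂ) C) + B * (starRingEnd ℂ) B * ((starRingEnd ℂ) C - (starRingEnd ℂ) A) + C * (starRingEnd ℂ) C * ((starRingEnd ℂ) A - (starRingEnd ℂ) B)) - (starRingEnd ℂ) A * (A * (starRingEnd ℂ) A * (B - C) + B * (starRingEnd ℂ) B * (C - A) + C * (starRingEnd ℂ) C * (A - B)) - A * (starRingEnd ℂ) A * (((B - A) * ((starRingEnd ℂ) C - (starRingEnd ℂ) A) - ((starRingEnd ℂ) B - (starRingEnd ℂ) A) * (C - A)) + (2 * (T:ℂ) * Complex.I))) * ht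
  have ke : ((A * (starRingEnd ℂ) A * (B - C) + B * (starRingEnd ℂ) B * (C - A) + C * (starRingEnd ℂ) C * (A - B)) + A * ((B - A) * ((starRingEnd ℂ) C - (starRingEnd ℂ) A) - ((starRingEnd ℂ) B - (starRingEnd ℂ) A) * (C - A))) * ((A * (starRingEnd ℂ) A * ((starRingEnd ℂ) B - (starRingEnd ℂ) C) + B * (starRingEnd ℂ) B * ((starRingEnd ℂ) C - (starRingEnd ℂ) A) + C * (starRingEnd ℂ) C * ((starRingEnd ℂ) A - (starRingEnd ℂ) B)) - (starRingEnd ℂ) A * ((B - A) * ((starRingEnd ℂ) C - (starRingEnd ℂ) A) - ((starRingEnd ℂ) B - (starRingEnd ℂ) A) * (C - A)))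
      = ((B - C) * ((starRingEnd ℂ) B - (starRingEnd ℂ) C)) * (((C - A) * ((starRingEnd ℂ) C - (starRingEnd ℂ) A)) * ((A - B) * ((starRingEnd ℂ) A - (starRingEnd ℂ) B))) := by ring
  rw [← h1, ← h2, ← h3] at ke
  have key : (R:ℂ)^2 * -((2 * (T:ℂ) * Complex.I)^2) = (a:ℂ)^2 * ((b:ℂ)^2 * (c:ℂ)^2) :=
    ka.trans (kd.trans ke)
  have hRT : R^2 * (4*T^2) = a^2 * (b^2 * c^2) := by
    have hcast : ((R^2*(4*T^2):ℝ):ℂ) = ((a^2*(b^2*c^2):ℝ):ℂ) := by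
      push_cast
      linear_combination key + 4*(R:ℂ)^2*(T:ℂ)^2 * Complex.I_sq
    exact_mod_cast hcast
  -- Heron-type identity for T^2
  have ca : (2 * (T:ℂ) * Complex.I)^2 = ((B - A) * ((starRingEnd ℂ) C - (starRingEnd ℂ) A) - ((starRingEnd ℂ) B - (starRingEnd ℂ) A) * (C - A))^2 := by
    linear_combination -((2 * (T:ℂ) * Complex.I) + ((B - A) * ((starRingEnd ℂ) C - (starRingEnd ℂ) A) - ((starRingEnd ℂ) B - (starRingEnd ℂ) A) * (C - A))) * ht
  have cb : ((B - A) * ((starRingEnd ℂ) C - (starRingEnd ℂ) A) - ((starRingEnd ℂ) B - (starRingEnd ℂ) A) * (C - A))^2 = (((C - A) * ((starRingEnd ℂ) C - (starRingEnd ℂ) A)) + ((A - B) * ((starRingEnd ℂ) A - (starRingEnd ℂ) B)) - ((B - C) * ((starRingEnd ℂ) B - (starRingEnd ℂ) C)))^2 - 4 * ((C - A) * ((starRingEnd ℂ) C - (starRingEnd ℂ) A)) * ((A - B) * ((starRingEnd ℂ) A - (starRingEnd ℂ) B)) := by ring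
  rw [← h1, ← h2, ← h3] at cb
  have ck := ca.trans cb
  have hT2r : (4*T^2 : ℝ) = 4*(b^2*c^2) - (b^2+c^2-a^2)^2 := by
    have hcast : ((4*T^2:ℝ):ℂ) = ((4*(b^2*c^2) - (b^2+c^2-a^2)^2 :ℝ):ℂ) := by
      push_cast
      linear_combination -ck + 4*(T:ℂ)^2*Complex.I_sq
    exact_mod_cast hcast
  have hT2eq : 4*T^2 = (a+b+c)*((b+c-a)*((c+a-b)*(a+b-c))) := by
    linear_combination hT2r
  -- nondegeneracy and positivity
  have hT0 : T ≠ 0 := hnd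
  have hT2pos : 0 < T^2 := by
    rcases hT0.lt_or_gt with h | h
    · nlinarith
    · nlinarith
  have hBC : B ≠ C := by
    intro h; exact hT0 (by rw [hTdef, h, Complex.mul_conj]; exact Complex.ofReal_im _)
  have hCA : C ≠ A := by
    intro h; apply hT0; rw [hTdef, h]; simp
  have hAB : A ≠ B := by
    intro h; apply hT0; rw [hTdef, h]; simp
  have ha0 : 0 < a := by rw [ha]; exact norm_pos_iff.mpr (sub_ne_zero.mpr hBC)
  have hb0 : 0 < b := by rw [hb]; exact norm_pos_iff.mpr (sub_ne_zero.mpr hCA)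
  have hc0 : 0 < c := by rw [hc]; exact norm_pos_iff.mpr (sub_ne_zero.mpr hAB)
  have hs0 : 0 < a + b + c := by linarith
  have hu : 0 < b + c - a := by
    by_contra hcon
    push_neg at hcon
    have hv : 0 < c + a - b := by linarith
    have hw : 0 < a + b - c := by linarith
    nlinarith [hT2eq, hT2pos, mul_pos (mul_pos hv hw) hs0]
  have hv : 0 < c + a - b := by
    by_contra hcon
    push_neg at hcon
    have hu' : 0 < b + c - a := by linarith
    have hw : 0 < a + b - c := by linarith
    nlinarith [hT2eq, hT2pos, mul_pos (mul_pos hu' hw) hs0]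
  have hw : 0 < a + b - c := by
    by_contra hcon
    push_neg at hcon
    have hu' : 0 < b + c - a := by linarith
    have hv' : 0 < c + a - b := by linarith
    nlinarith [hT2eq, hT2pos, mul_pos (mul_pos hu' hv') hs0]
  have hRpos : 0 < R := by
    have hR0 : 0 ≤ R := by rw [← hRA]; exact norm_nonneg _
    rcases hR0.eq_or_lt with h | h
    · exfalso
      rw [← h] at hRT
      nlinarith [mul_pos (pow_pos ha0 2) (mul_pos (pow_pos hb0 2) (pow_pos hc0 2))]
    · exact h
  have hr0 : 0 ≤ r := by rw [hr]; positivity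
  have hρ0 : 0 ≤ ρ := by rw [hρ]; exact div_nonneg hr0 hRpos.le
  -- 2 R |T| = a b c
  have h2RK : 2*R*|T| = a*(b*c) := by
    have habs : |T|^2 = T^2 := _root_.sq_abs T
    have hsq : (2*R*|T|)^2 = (a*(b*c))^2 := by
      linear_combination 4*R^2*habs + hRT
    nlinarith [hsq, mul_pos (mul_pos (by norm_num : (0:ℝ) < 2) hRpos) (abs_pos.mpr hT0),
      mul_pos ha0 (mul_pos hb0 hc0), abs_nonneg T]
  -- value of ρ in terms of side lengths
  have hρval : ρ * (2*(a*(b*c))) = (b+c-a)*((c+a-b)*(a+b-c)) := by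
    have hstep : ρ = |T| / ((a+b+c)*R) := by rw [hρ, hr, div_div]
    rw [hstep, div_mul_eq_mul_div, div_eq_iff (by positivity : ((a+b+c)*R) ≠ 0)]
    linear_combination (-2*|T|)*h2RK + R*hT2eq + 4*R*(_root_.sq_abs T)
  have hρC : (ρ:ℂ) = (((b:ℂ)+c-a) * (((c:ℂ)+a-b) * ((a:ℂ)+b-c))) / (2*((a:ℂ)*((b:ℂ)*c))) := by
    have hne : (2*((a:ℂ)*((b:ℂ)*c))) ≠ 0 := by
      exact_mod_cast (show ((2*(a*(b*c)):ℝ)) ≠ 0 by positivity)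
    rw [eq_div_iff hne]
    exact_mod_cast congrArg (fun x : ℝ => (x:ℂ)) hρval
  -- barycentric expression of the circumcenter
  have e1 : X₃ * -((2 * (T:ℂ) * Complex.I)^2) = (A * (starRingEnd ℂ) A * (B - C) + B * (starRingEnd ℂ) B * (C - A) + C * (starRingEnd ℂ) C * (A - B)) * (2 * (T:ℂ) * Complex.I) := by
    linear_combination (2 * (T:ℂ) * Complex.I) * s1
  have e2 : (A * (starRingEnd ℂ) A * (B - C) + B * (starRingEnd ℂ) B * (C - A) + C * (starRingEnd ℂ) C * (A - B)) * (2 * (T:ℂ) * Complex.I) = (A * (starRingEnd ℂ) A * (B - C) + B * (starRingEnd ℂ) B * (C - A) + C * (starRingEnd ℂ) C * (A - B)) * ((B - A) * ((starRingEnd ℂ) C - (starRingEnd ℂ) A) - ((starRingEnd ℂ) B - (starRingEnd ℂ) A) * (C - A)) := by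
    linear_combination -(A * (starRingEnd ℂ) A * (B - C) + B * (starRingEnd ℂ) B * (C - A) + C * (starRingEnd ℂ) C * (A - B)) * ht
  have e3 : (A * (starRingEnd ℂ) A * (B - C) + B * (starRingEnd ℂ) B * (C - A) + C * (starRingEnd ℂ) C * (A - B)) * ((B - A) * ((starRingEnd ℂ) C - (starRingEnd ℂ) A) - ((starRingEnd ℂ) B - (starRingEnd ℂ) A) * (C - A))
      = ((B - C) * ((starRingEnd ℂ) B - (starRingEnd ℂ) C)) * (((C - A) * ((starRingEnd ℂ) C - (starRingEnd ℂ) A)) + ((A - B) * ((starRingEnd ℂ) A - (starRingEnd ℂ) B)) - ((B - C) * ((starRingEnd ℂ) B - (starRingEnd ℂ) C))) * A + ((C - A) * ((starRingEnd ℂ) C - (starRingEnd ℂ) A)) * (((A - B) * ((starRingEnd ℂ) A - (starRingEnd ℂ) B)) + ((B - C) * ((starRingEnd ℂ) B - (starRingEnd ℂ) C)) - ((C - A) * ((starRingEnd ℂ) C - (starRingEnd ℂ) A))) * B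
        + ((A - B) * ((starRingEnd ℂ) A - (starRingEnd ℂ) B)) * (((B - C) * ((starRingEnd ℂ) B - (starRingEnd ℂ) C)) + ((C - A) * ((starRingEnd ℂ) C - (starRingEnd ℂ) A)) - ((A - B) * ((starRingEnd ℂ) A - (starRingEnd ℂ) B))) * C := by ring
  rw [← h1, ← h2, ← h3] at e3
  have e4 := (e1.trans e2).trans e3
  have hX34 : X₃ * ((4*T^2 : ℝ):ℂ)
      = (a:ℂ)^2 * ((b:ℂ)^2 + (c:ℂ)^2 - (a:ℂ)^2) * A
        + (b:ℂ)^2 * ((c:ℂ)^2 + (a:ℂ)^2 - (b:ℂ)^2) * B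
        + (c:ℂ)^2 * ((a:ℂ)^2 + (b:ℂ)^2 - (c:ℂ)^2) * C := by
    push_cast
    linear_combination e4 + 4*X₃*(T:ℂ)^2*Complex.I_sq
  have hprod_eq : ((4*T^2 : ℝ):ℂ) = (((a+b+c)*((b+c-a)*((c+a-b)*(a+b-c))) : ℝ):ℂ) := by
    exact_mod_cast hT2eq
  rw [hprod_eq] at hX34
  have hdenR : (((a+b+c)*((b+c-a)*((c+a-b)*(a+b-c))) : ℝ)) ≠ 0 := by positivity
  have hdenC : ((((a+b+c)*((b+c-a)*((c+a-b)*(a+b-c))) : ℝ)):ℂ) ≠ 0 :=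
    Complex.ofReal_ne_zero.mpr hdenR
  have hX3e : X₃ = ((a:ℂ)^2 * ((b:ℂ)^2 + (c:ℂ)^2 - (a:ℂ)^2) * A
        + (b:ℂ)^2 * ((c:ℂ)^2 + (a:ℂ)^2 - (b:ℂ)^2) * B
        + (c:ℂ)^2 * ((a:ℂ)^2 + (b:ℂ)^2 - (c:ℂ)^2) * C)
      / ((((a+b+c)*((b+c-a)*((c+a-b)*(a+b-c))) : ℝ)):ℂ) := eq_div_of_mul_eq hdenC hX34
  -- final assembly
  have hD9 : (0:ℝ) < a*(b+c-a) + b*(c+a-b) + c*(a+b-c) :=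
    add_pos (add_pos (mul_pos ha0 hu) (mul_pos hb0 hv)) (mul_pos hc0 hw)
  have hD9C : ((a*(b+c-a) + b*(c+a-b) + c*(a+b-c) : ℝ):ℂ) ≠ 0 :=
    Complex.ofReal_ne_zero.mpr hD9.ne'
  have hρ4C : ((ρ + 4 : ℝ):ℂ) ≠ 0 :=
    Complex.ofReal_ne_zero.mpr (by linarith : (ρ + 4 : ℝ) ≠ 0)
  have nS : (a:ℂ) + b + c ≠ 0 := by
    exact_mod_cast (show ((a+b+c:ℝ)) ≠ 0 from hs0.ne')
  have hX9m : X₉ * ((a*(b+c-a) + b*(c+a-b) + c*(a+b-c) : ℝ):ℂ)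
      = (a * (b + c - a)) • A + (b * (c + a - b)) • B + (c * (a + b - c)) • C := by
    rw [hX₉]; exact div_mul_cancel₀ _ hD9C
  have hX1m : X₁ * ((a+b+c : ℝ):ℂ) = (a:ℂ)*A + (b:ℂ)*B + (c:ℂ)*C := by
    rw [hX₁]
    simp only [Complex.real_smul]
    push_cast
    field_simp
  have hX2m : X₂ * 3 = A + B + C := by
    rw [hX₂]; exact div_mul_cancel₀ _ three_ne_zero
  have hρmC : ((ρ * (2*(a*(b*c))) : ℝ):ℂ) = (((b+c-a)*((c+a-b)*(a+b-c)) : ℝ):ℂ) := by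
    exact_mod_cast hρval
  have hM0 : (0:ℝ) < (a+b+c) * ((a*(b+c-a)+b*(c+a-b)+c*(a+b-c)) * (((a+b+c)*((b+c-a)*((c+a-b)*(a+b-c)))) * (2*(a*(b*c)) * 3))) := by
    have h2abc : (0:ℝ) < 2*(a*(b*c))*3 := by positivity
    exact mul_pos hs0 (mul_pos hD9 (mul_pos (mul_pos hs0 (mul_pos hu (mul_pos hv hw))) h2abc))
  have hMC : (((a+b+c) * ((a*(b+c-a)+b*(c+a-b)+c*(a+b-c)) * (((a+b+c)*((b+c-a)*((c+a-b)*(a+b-c)))) * (2*(a*(b*c)) * 3))) : ℝ):ℂ) ≠ 0 :=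
    Complex.ofReal_ne_zero.mpr hM0.ne'
  rw [eq_div_iff hρ4C]
  apply mul_right_cancel₀ hMC
  linear_combination (norm := (simp only [Complex.real_smul]; push_cast; ring1))
      ((ρ:ℂ)+4) * (((a:ℂ)+b+c) * ((((a:ℂ)+b+c)*(((b:ℂ)+c-a)*(((c:ℂ)+a-b)*((a:ℂ)+b-c)))) * (6*((a:ℂ)*((b:ℂ)*c))))) * hX9m
    + ((ρ:ℂ)+2) * (((a:ℂ)*((b:ℂ)+c-a) + (b:ℂ)*((c:ℂ)+a-b) + (c:ℂ)*((a:ℂ)+b-c)) * ((((a:ℂ)+b+c)*(((b:ℂ)+c-a)*(((c:ℂ)+a-b)*((a:ℂ)+b-c)))) * (6*((a:ℂ)*((b:ℂ)*c))))) * hX1m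
    - 2 * (((a:ℂ)+b+c) * (((a:ℂ)*((b:ℂ)+c-a) + (b:ℂ)*((c:ℂ)+a-b) + (c:ℂ)*((a:ℂ)+b-c)) * ((((a:ℂ)+b+c)*(((b:ℂ)+c-a)*(((c:ℂ)+a-b)*((a:ℂ)+b-c)))) * (6*((a:ℂ)*((b:ℂ)*c)))))) * hX2m
    - 2*(ρ:ℂ) * (((a:ℂ)+b+c) * (((a:ℂ)*((b:ℂ)+c-a) + (b:ℂ)*((c:ℂ)+a-b) + (c:ℂ)*((a:ℂ)+b-c)) * (6*((a:ℂ)*((b:ℂ)*c))))) * hX34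
    + 3*(((a:ℂ)+b+c)*((((a:ℂ)+b+c)*(((b:ℂ)+c-a)*(((c:ℂ)+a-b)*((a:ℂ)+b-c))))*((a:ℂ)*((b:ℂ)+c-a)*A + (b:ℂ)*((c:ℂ)+a-b)*B + (c:ℂ)*((a:ℂ)+b-c)*C)) + ((a:ℂ)*((b:ℂ)+c-a) + (b:ℂ)*((c:ℂ)+a-b) + (c:ℂ)*((a:ℂ)+b-c))*((((a:ℂ)+b+c)*(((b:ℂ)+c-a)*(((c:ℂ)+a-b)*((a:ℂ)+b-c))))*((a:ℂ)*A + (b:ℂ)*B + (c:ℂ)*C)) - 2*(((a:ℂ)+b+c)*(((a:ℂ)*((b:ℂ)+c-a) + (b:ℂ)*((c:ℂ)+a-b) + (c:ℂ)*((a:ℂ)+b-c))*((a:ℂ)^2*((b:ℂ)^2+(c:ℂ)^2-(a:ℂ)^2)*A + (b:ℂ)^2*((c:ℂ)^2+(a:ℂ)^2-(b:ℂ)^2)*B + (c:ℂ)^2*((a:ℂ)^2+(b:ℂ)^2-(c:ℂ)^2)*C)))) * hρmC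
end
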